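/- Let V be a finite-dimensional complex vector space and suppose (X⁺, X₁⁻, K) and (X⁺, X₂⁻, K) are both U_q(sl₂)-module structures on V with the same operators X⁺ and K. Then X₁⁻ = X₂⁻; that is, the action of X⁻ on a finite-dimensional U_q(sl₂)-module is uniquely determined by the actions of X⁺ and K. -/

import Mathlib

open scoped TensorProduct

noncomputable section

/-- The `q`-integer `[t] = (q^t - q^(-t))/(q - q⁻¹)`. -/
def qnum (q : ℂ) (t : ℤ) : ℂ := (q ^ t - q ^ (-t)) / (q - q⁻¹)

/-- The `q`-factorial `[t]! = [t][t-1]⋯[1]`. -/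
def qfac (q : ℂ) (t : ℕ) : ℂ := ∏ k ∈ Finset.range t, qnum q ((k : ℤ) + 1)

/-- Commutator `[X,Y] = XY - YX`. -/
def brk {V : Type*} [AddCommGroup V] [Module ℂ V] (X Y : Module.End ℂ V) :
    Module.End ℂ V := X * Y - Y * X

/-- `q`-commutator `[X,Y]_t = t XY - t⁻¹ YX`. -/
def brkq {V : Type*} [AddCommGroup V] [Module ℂ V] (t : ℂ) (X Y : Module.End ℂ V) :
    Module.End ℂ V := t • (X * Y) - t⁻¹ • (Y * X)

/-- A `U'_q(L(sl₂))`-module structure on a complex vector space `V`: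
operators `(E₀⁺, E₁⁺, E₁⁻, K₀, K₁)` with `K₀, K₁` mutually inverse (hence invertible) and
the defining relations; `K₀ = K₁⁻¹` throughout. -/
structure IsUqpRep (q : ℂ) {V : Type*} [AddCommGroup V] [Module ℂ V]
    (E0 E1p E1m K0 K1 : Module.End ℂ V) : Prop where
  K0K1 : K0 * K1 = 1
  K1K0 : K1 * K0 = 1
  K0E0 : K0 * E0 = q ^ 2 • (E0 * K0)
  K1E1p : K1 * E1p = q ^ 2 • (E1p * K1)
  K1E1m : K1 * E1m = (q ^ 2)⁻¹ • (E1m * K1)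
  K1E0 : K1 * E0 = (q ^ 2)⁻¹ • (E0 * K1)
  K0E1p : K0 * E1p = (q ^ 2)⁻¹ • (E1p * K0)
  K0E1m : K0 * E1m = q ^ 2 • (E1m * K0)
  e1comm : E1p * E1m - E1m * E1p = (q - q⁻¹)⁻¹ • (K1 - K0)
  e0e1m : E0 * E1m = E1m * E0
  serre01 : brk E0 (brkq q⁻¹ E0 (brkq q E0 E1p)) = 0
  serre10 : brk E1p (brkq q⁻¹ E1p (brkq q E1p E0)) = 0

/-- `K₀` of the evaluation module `V(ℓ,a)`: `K₀ vᵢ = q^(2i-ℓ) vᵢ`. -/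
def evalK0 (q : ℂ) (ℓ : ℕ) : Module.End ℂ (Fin (ℓ + 1) → ℂ) :=
  (Matrix.diagonal fun i : Fin (ℓ + 1) => q ^ (2 * (i : ℤ) - ℓ)).mulVecLin

/-- `K₁` of the evaluation module `V(ℓ,a)`: `K₁ vᵢ = q^(ℓ-2i) vᵢ`. -/
def evalK1 (q : ℂ) (ℓ : ℕ) : Module.End ℂ (Fin (ℓ + 1) → ℂ) :=
  (Matrix.diagonal fun i : Fin (ℓ + 1) => q ^ ((ℓ : ℤ) - 2 * i)).mulVecLin

/-- `E₀⁺` of the evaluation module `V(ℓ,a)`: `E₀⁺ vᵢ = a q [i+1] vᵢ₊₁`. -/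
def evalE0 (q a : ℂ) (ℓ : ℕ) : Module.End ℂ (Fin (ℓ + 1) → ℂ) :=
  (Matrix.of fun j i : Fin (ℓ + 1) =>
    if (j : ℕ) = (i : ℕ) + 1 then a * q * qnum q ((i : ℤ) + 1) else 0).mulVecLin

/-- `E₁⁺` of the evaluation module `V(ℓ,a)`: `E₁⁺ vᵢ = [ℓ-i+1] vᵢ₋₁`. -/
def evalE1p (q : ℂ) (ℓ : ℕ) : Module.End ℂ (Fin (ℓ + 1) → ℂ) :=
  (Matrix.of fun j i : Fin (ℓ + 1) =>
    if (i : ℕ) = (j : ℕ) + 1 then qnum q ((ℓ : ℤ) - (i : ℤ) + 1) else 0).mulVecLin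

/-- `E₁⁻` of the evaluation module `V(ℓ,a)`: `E₁⁻ vᵢ = [i+1] vᵢ₊₁`. -/
def evalE1m (q : ℂ) (ℓ : ℕ) : Module.End ℂ (Fin (ℓ + 1) → ℂ) :=
  (Matrix.of fun j i : Fin (ℓ + 1) =>
    if (j : ℕ) = (i : ℕ) + 1 then qnum q ((i : ℤ) + 1) else 0).mulVecLin

/-- Irreducibility: the only subspaces invariant under all five operators are `⊥` and `⊤`. -/
def IsIrred {V : Type*} [AddCommGroup V] [Module ℂ V]
    (E0 E1p E1m K0 K1 : Module.End ℂ V) : Prop :=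
  ∀ W : Submodule ℂ V, (∀ v ∈ W, E0 v ∈ W) → (∀ v ∈ W, E1p v ∈ W) →
    (∀ v ∈ W, E1m v ∈ W) → (∀ v ∈ W, K0 v ∈ W) → (∀ v ∈ W, K1 v ∈ W) →
    W = ⊥ ∨ W = ⊤

/-- Type `(1,1)`: `K₀` is diagonalizable with all eigenvalues of the form `q^(2i-d)`,
`0 ≤ i ≤ d`, i.e. the corresponding eigenspaces span. -/
def IsType11 (q : ℂ) {V : Type*} [AddCommGroup V] [Module ℂ V] (K0 : Module.End ℂ V) : Prop :=
  ∃ d : ℕ, ⨆ i : Fin (d + 1), Module.End.eigenspace K0 (q ^ (2 * (i : ℤ) - d)) = ⊤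

/-- A `U_q(sl₂)`-module structure `(X⁺, X⁻, K)` (with `Kinv` the inverse of `K`). -/
structure IsUqSl2 (q : ℂ) {V : Type*} [AddCommGroup V] [Module ℂ V]
    (Xp Xm K Kinv : Module.End ℂ V) : Prop where
  KKinv : K * Kinv = 1
  KinvK : Kinv * K = 1
  KXp : K * Xp = q ^ 2 • (Xp * K)
  KXm : K * Xm = (q ^ 2)⁻¹ • (Xm * K)
  comm : Xp * Xm - Xm * Xp = (q - q⁻¹)⁻¹ • (K - Kinv)

/-- auxiliary: powers of a non-root-of-unity are injective -/
lemma qpow_inj {q : ℂ} (hq0 : q ≠ 0) (hq : ∀ n : ℕ, 0 < n → q ^ n ≠ 1)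
    {a b : ℕ} (h : q ^ a = q ^ b) : a = b := by
  have key : ∀ a b : ℕ, a < b → q ^ a = q ^ b → False := by
    intro a b hab he
    have h1 : q ^ a * q ^ (b - a) = q ^ a * 1 := by
      rw [← pow_add, mul_one, he]
      congr 1
      omega
    have h2 : q ^ (b - a) = 1 := mul_left_cancel₀ (pow_ne_zero a hq0) h1
    exact hq (b - a) (by omega) h2
  rcases lt_trichotomy a b with hab | hab | hab
  · exact (key a b hab h).elim
  · exact hab
  · exact (key b a hab h.symm).elim

/-- the weight sequence -/
def hwμ (q : ℂ) (j : ℕ) : ℂ := ((q ^ (j + 1))⁻¹) ^ 2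

/-- the coefficient sequence -/
def hwα (q : ℂ) (j : ℕ) : ℂ :=
  (q ^ j - (q ^ j)⁻¹) * ((q ^ (j + 1))⁻¹ - q ^ (j + 1)) * ((q - q⁻¹)⁻¹) ^ 2

lemma hwα_zero (q : ℂ) : hwα q 0 = 0 := by simp [hwα]

lemma hwμ_ne_zero {q : ℂ} (hq0 : q ≠ 0) (j : ℕ) : hwμ q j ≠ 0 := by
  simp [hwμ, pow_ne_zero, hq0]

lemma sub_inv_ne_zero {q : ℂ} (hq0 : q ≠ 0) (hq : ∀ n : ℕ, 0 < n → q ^ n ≠ 1) :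
    q - q⁻¹ ≠ 0 := by
  intro h
  have h1 : q = q⁻¹ := sub_eq_zero.mp h
  have h2 : q ^ 2 = 1 := by
    rw [sq]
    nth_rewrite 2 [h1]
    exact mul_inv_cancel₀ hq0
  exact hq 2 (by norm_num) h2

lemma hwα_rec {q : ℂ} (hq0 : q ≠ 0) (hq : ∀ n : ℕ, 0 < n → q ^ n ≠ 1) (j : ℕ) :
    hwα q (j + 1) = hwα q j + (q - q⁻¹)⁻¹ * (hwμ q j - (hwμ q j)⁻¹) := by
  have hd := sub_inv_ne_zero hq0 hq
  have hA : (q : ℂ) ^ (j + 1) ≠ 0 := pow_ne_zero _ hq0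
  have hcd : (q - q⁻¹)⁻¹ * (q - q⁻¹) = 1 := inv_mul_cancel₀ hd
  have e1 : (q : ℂ) ^ j = q ^ (j + 1) * q⁻¹ := by
    field_simp [pow_succ]
    ring
  have e2 : (q : ℂ) ^ (j + 2) = q ^ (j + 1) * q := by rw [pow_succ]
  have e3 : ((((q : ℂ) ^ (j + 1))⁻¹) ^ 2)⁻¹ = ((q : ℂ) ^ (j + 1)) ^ 2 := by
    simp
  simp only [hwα, hwμ, e1, e2, e3, mul_inv, inv_inv]
  generalize hc : (q - q⁻¹)⁻¹ = c at hcd ⊢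
  generalize hA2 : (q : ℂ) ^ (j + 1) = A
  linear_combination (c * ((A⁻¹) ^ 2 - A ^ 2)) * hcd

lemma hwα_ne_zero {q : ℂ} (hq0 : q ≠ 0) (hq : ∀ n : ℕ, 0 < n → q ^ n ≠ 1) (j : ℕ) :
    hwα q (j + 1) ≠ 0 := by
  have hd := sub_inv_ne_zero hq0 hq
  apply mul_ne_zero (mul_ne_zero ?_ ?_) (pow_ne_zero _ (inv_ne_zero hd))
  · intro h
    have h1 : q ^ (j + 1) = (q ^ (j + 1))⁻¹ := sub_eq_zero.mp h
    have h2 : q ^ (2 * (j + 1)) = 1 := by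
      rw [two_mul, pow_add]
      nth_rewrite 2 [h1]
      exact mul_inv_cancel₀ (pow_ne_zero _ hq0)
    exact hq (2 * (j + 1)) (by omega) h2
  · intro h
    have h1 : (q ^ (j + 2))⁻¹ = q ^ (j + 2) := sub_eq_zero.mp h
    have h2 : q ^ (2 * (j + 2)) = 1 := by
      rw [two_mul, pow_add]
      nth_rewrite 1 [← h1]
      exact inv_mul_cancel₀ (pow_ne_zero _ hq0)
    exact hq (2 * (j + 2)) (by omega) h2

lemma no_hw (q : ℂ) (hq0 : q ≠ 0) (hq : ∀ n : ℕ, 0 < n → q ^ n ≠ 1)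
    {W : Type*} [AddCommGroup W] [Module ℂ W] [FiniteDimensional ℂ W]
    (E F K K' : Module.End ℂ W)
    (hKF : K * F = (q ^ 2)⁻¹ • (F * K))
    (hK'K : K' * K = 1)
    (hcomm : E * F - F * E = (q - q⁻¹)⁻¹ • (K - K'))
    (v : W) (hv : v ≠ 0) (hEv : E v = 0) (hKv : K v = (q ^ 2)⁻¹ • v) : False := by
  classical
  have hwsucc : ∀ j : ℕ, (F ^ (j + 1)) v = F ((F ^ j) v) := by
    intro j
    rw [pow_succ']
    rfl
  have hKw : ∀ j : ℕ, K ((F ^ j) v) = hwμ q j • (F ^ j) v := by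
    intro j
    induction j with
    | zero =>
      simpa [hwμ, inv_pow] using hKv
    | succ j ih =>
      have happ : (K * F) ((F ^ j) v) = ((q ^ 2)⁻¹ • (F * K)) ((F ^ j) v) := by rw [hKF]
      simp only [Module.End.mul_apply, LinearMap.smul_apply] at happ
      rw [hwsucc, happ, ih, map_smul, smul_smul]
      congr 1
      simp only [hwμ, pow_succ, mul_inv, mul_pow, inv_pow]
      ring
  have hμ0 : ∀ j : ℕ, hwμ q j ≠ 0 := hwμ_ne_zero hq0
  have hK'w : ∀ j : ℕ, K' ((F ^ j) v) = (hwμ q j)⁻¹ • (F ^ j) v := by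
    intro j
    have happ : (K' * K) ((F ^ j) v) = (F ^ j) v := by rw [hK'K]; rfl
    rw [Module.End.mul_apply, hKw, map_smul] at happ
    exact ((inv_smul_eq_iff₀ (hμ0 j)).mpr happ.symm).symm
  have key : ∀ j : ℕ, E ((F ^ (j + 1)) v) =
      F (E ((F ^ j) v)) + ((q - q⁻¹)⁻¹ * (hwμ q j - (hwμ q j)⁻¹)) • (F ^ j) v := by
    intro j
    have happ : (E * F - F * E) ((F ^ j) v) = ((q - q⁻¹)⁻¹ • (K - K')) ((F ^ j) v) := by
      rw [hcomm]
    simp only [LinearMap.sub_apply, Module.End.mul_apply, LinearMap.smul_apply] at happ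
    have h2 : E (F ((F ^ j) v)) =
        F (E ((F ^ j) v)) + (q - q⁻¹)⁻¹ • (K ((F ^ j) v) - K' ((F ^ j) v)) :=
      by rw [add_comm]; exact eq_add_of_sub_eq happ
    rw [hwsucc, h2, hKw, hK'w, ← sub_smul, smul_smul]
  have hEw : ∀ j : ℕ, E ((F ^ (j + 1)) v) = hwα q (j + 1) • (F ^ j) v := by
    intro j
    induction j with
    | zero =>
      rw [key 0]
      simp only [pow_zero, Module.End.one_apply, hEv, map_zero, zero_add]
      rw [hwα_rec hq0 hq 0, hwα_zero, zero_add]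
    | succ j ih =>
      rw [key (j + 1), ih, map_smul, ← hwsucc, hwα_rec hq0 hq (j + 1), ← add_smul]
  have hex : ∃ k : ℕ, (F ^ k) v = 0 := by
    by_contra hno
    push_neg at hno
    have hinj : Function.Injective (hwμ q) := by
      intro i j hij
      have h2 : ((q ^ ((i + 1) * 2))⁻¹ : ℂ) = (q ^ ((j + 1) * 2))⁻¹ := by
        simpa [hwμ, inv_pow, pow_mul] using hij
      have h3 : (q : ℂ) ^ ((i + 1) * 2) = q ^ ((j + 1) * 2) := inv_injective h2
      have := qpow_inj hq0 hq h3
      omega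
    exact Module.Finite.not_linearIndependent_of_infinite (fun j : ℕ => (F ^ j) v)
      (Module.End.eigenvectors_linearIndependent' K (hwμ q) hinj _
        (fun j => ⟨Module.End.mem_eigenspace_iff.mpr (hKw j), hno j⟩))
  set k := Nat.find hex with hkdef
  have hk : (F ^ k) v = 0 := Nat.find_spec hex
  have hk0 : k ≠ 0 := by
    intro h
    apply hv
    simpa [h] using hk
  obtain ⟨j, hj⟩ : ∃ j : ℕ, k = j + 1 := ⟨k - 1, by omega⟩
  have hjne : (F ^ j) v ≠ 0 := Nat.find_min hex (by omega)
  have hzero : hwα q (j + 1) • (F ^ j) v = 0 := by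
    rw [← hEw j, ← hj]
    rw [hk, map_zero]
  rcases smul_eq_zero.mp hzero with h | h
  · exact hwα_ne_zero hq0 hq j h
  · exact hjne h

/-- inverse conjugation relation -/
lemma uq_conj_inv {W : Type*} [AddCommGroup W] [Module ℂ W]
    (K Kinv X : Module.End ℂ W) (hKi : Kinv * K = 1) (hiK : K * Kinv = 1)
    (t : ℂ) (ht : t ≠ 0) (h : K * X = t • (X * K)) :
    Kinv * X = t⁻¹ • (X * Kinv) := by
  have h1 : Kinv * (K * X) * Kinv = X * Kinv := by
    rw [← mul_assoc, hKi, one_mul]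
  rw [h, mul_smul_comm, smul_mul_assoc, mul_assoc, mul_assoc, hiK, mul_one] at h1
  rw [← h1, smul_smul, inv_mul_cancel₀ ht, one_smul]

/-- on a finite-dimensional `U_q(sl₂)`-module, the action of `X⁻` is
uniquely determined by those of `X⁺` and `K`. -/
theorem stmt6 (q : ℂ) (hq0 : q ≠ 0) (hq : ∀ n : ℕ, 0 < n → q ^ n ≠ 1)
    {V : Type*} [AddCommGroup V] [Module ℂ V] [FiniteDimensional ℂ V]
    (Xp X1m X2m K Kinv : Module.End ℂ V)
    (h1 : IsUqSl2 q Xp X1m K Kinv) (h2 : IsUqSl2 q Xp X2m K Kinv) :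
    X1m = X2m := by
  have hq2 : (q : ℂ) ^ 2 ≠ 0 := pow_ne_zero _ hq0
  -- derived relations
  have hKinvXp : Kinv * Xp = (q ^ 2)⁻¹ • (Xp * Kinv) :=
    uq_conj_inv K Kinv Xp h1.KinvK h1.KKinv _ hq2 h1.KXp
  have hKinvX1m : Kinv * X1m = q ^ 2 • (X1m * Kinv) := by
    have := uq_conj_inv K Kinv X1m h1.KinvK h1.KKinv _ (inv_ne_zero hq2) h1.KXm
    rwa [inv_inv] at this
  -- right-nested versions
  have dKXp : ∀ Z : Module.End ℂ V, K * (Xp * Z) = q ^ 2 • (Xp * (K * Z)) := by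
    intro Z; rw [← mul_assoc, h1.KXp, smul_mul_assoc, mul_assoc]
  have dKinvXp : ∀ Z : Module.End ℂ V, Kinv * (Xp * Z) = (q ^ 2)⁻¹ • (Xp * (Kinv * Z)) := by
    intro Z; rw [← mul_assoc, hKinvXp, smul_mul_assoc, mul_assoc]
  have dKX1m : ∀ Z : Module.End ℂ V, K * (X1m * Z) = (q ^ 2)⁻¹ • (X1m * (K * Z)) := by
    intro Z; rw [← mul_assoc, h1.KXm, smul_mul_assoc, mul_assoc]
  have dKinvX1m : ∀ Z : Module.End ℂ V, Kinv * (X1m * Z) = q ^ 2 • (X1m * (Kinv * Z)) := by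
    intro Z; rw [← mul_assoc, hKinvX1m, smul_mul_assoc, mul_assoc]
  have dKKinv : ∀ Z : Module.End ℂ V, K * (Kinv * Z) = Z := by
    intro Z; rw [← mul_assoc, h1.KKinv, one_mul]
  have dKinvK : ∀ Z : Module.End ℂ V, Kinv * (K * Z) = Z := by
    intro Z; rw [← mul_assoc, h1.KinvK, one_mul]
  have hFE : X1m * Xp = Xp * X1m - (q - q⁻¹)⁻¹ • (K - Kinv) := by
    rw [← h1.comm]; abel
  have dFE : ∀ Z : Module.End ℂ V,
      X1m * (Xp * Z) = Xp * (X1m * Z) - (q - q⁻¹)⁻¹ • (K * Z - Kinv * Z) := by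
    intro Z
    rw [← mul_assoc, hFE, sub_mul, smul_mul_assoc, sub_mul, mul_assoc]
  -- D relations
  set D := X1m - X2m with hD
  have hXpD : D * Xp = Xp * D := by
    have e : Xp * D - D * Xp = (Xp * X1m - X1m * Xp) - (Xp * X2m - X2m * Xp) := by
      rw [hD]; noncomm_ring
    rw [h1.comm, h2.comm, sub_self] at e
    exact (sub_eq_zero.mp e).symm
  have hKD : K * D = (q ^ 2)⁻¹ • (D * K) := by
    rw [hD, mul_sub, sub_mul, smul_sub, h1.KXm, h2.KXm]
  have dKD : ∀ Z : Module.End ℂ V, K * (D * Z) = (q ^ 2)⁻¹ • (D * (K * Z)) := by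
    intro Z; rw [← mul_assoc, hKD, smul_mul_assoc, mul_assoc]
  have dDXp : ∀ Z : Module.End ℂ V, D * (Xp * Z) = Xp * (D * Z) := by
    intro Z; rw [← mul_assoc, hXpD, mul_assoc]
  -- big operators on End V
  set EE : Module.End ℂ (Module.End ℂ V) :=
    LinearMap.mulLeft ℂ Xp - LinearMap.mulLeft ℂ K * LinearMap.mulRight ℂ (Kinv * Xp) with hEE
  set FF : Module.End ℂ (Module.End ℂ V) :=
    LinearMap.mulRight ℂ K * (LinearMap.mulLeft ℂ X1m - LinearMap.mulRight ℂ X1m) with hFF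
  set KK : Module.End ℂ (Module.End ℂ V) :=
    LinearMap.mulLeft ℂ K * LinearMap.mulRight ℂ Kinv with hKK
  set KK' : Module.End ℂ (Module.End ℂ V) :=
    LinearMap.mulLeft ℂ Kinv * LinearMap.mulRight ℂ K with hKK'
  have relK'K : KK' * KK = 1 := by
    apply LinearMap.ext
    intro A
    simp only [hKK, hKK', Module.End.mul_apply, LinearMap.mulLeft_apply,
      LinearMap.mulRight_apply, Module.End.one_apply]
    simp only [mul_assoc, h1.KinvK, mul_one, dKinvK]
  have relKF : KK * FF = (q ^ 2)⁻¹ • (FF * KK) := by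
    apply LinearMap.ext
    intro A
    simp only [hKK, hFF, Module.End.mul_apply, LinearMap.smul_apply, LinearMap.sub_apply,
      LinearMap.mulLeft_apply, LinearMap.mulRight_apply]
    simp only [mul_assoc, mul_sub, sub_mul, smul_sub, smul_smul, smul_mul_assoc,
      mul_smul_comm, dKKinv, dKinvK, h1.KKinv, h1.KinvK, mul_one, one_mul,
      dKXp, dKinvXp, dKX1m, dKinvX1m]
    match_scalars <;> field_simp
  have relcomm : EE * FF - FF * EE = (q - q⁻¹)⁻¹ • (KK - KK') := by
    apply LinearMap.ext
    intro A
    simp only [hEE, hFF, hKK, hKK', Module.End.mul_apply, LinearMap.smul_apply,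
      LinearMap.sub_apply, LinearMap.mulLeft_apply, LinearMap.mulRight_apply]
    simp only [mul_assoc, mul_sub, sub_mul, smul_sub, sub_smul, smul_smul, smul_mul_assoc,
      mul_smul_comm, dKKinv, dKinvK, h1.KKinv, h1.KinvK, mul_one, one_mul,
      dKXp, dKinvXp, dKX1m, dKinvX1m, dFE, hFE]
    match_scalars <;> field_simp <;> ring
  -- the highest weight vector
  by_contra hne
  have hDne : D ≠ 0 := fun h => hne (sub_eq_zero.mp (hD ▸ h))
  have hvne : D * K ≠ 0 := by
    intro h0
    apply hDne
    have : D * (K * Kinv) = 0 := by rw [← mul_assoc, h0, zero_mul]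
    rwa [h1.KKinv, mul_one] at this
  have hEv : EE (D * K) = 0 := by
    simp only [hEE, LinearMap.sub_apply, Module.End.mul_apply, LinearMap.mulLeft_apply,
      LinearMap.mulRight_apply]
    simp only [mul_assoc, dKKinv, hXpD, dDXp, dKD, hKD, dKXp, smul_smul, mul_smul_comm,
      smul_mul_assoc]
    match_scalars <;> field_simp <;> ring
  have hKv : KK (D * K) = (q ^ 2)⁻¹ • (D * K) := by
    simp only [hKK, Module.End.mul_apply, LinearMap.mulLeft_apply, LinearMap.mulRight_apply]
    simp only [mul_assoc, h1.KKinv, mul_one, hKD]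
  exact no_hw q hq0 hq EE FF KK KK' relKF relK'K relcomm (D * K) hvne hEv hKv

end
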